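/- Let α ≥ 1 be a real number and n ∈ ℤ. There exists a constant C > 0 (depending on α and n) such that for all complex numbers z and w one has | |z|^{α−n} z^n − |w|^{α−n} w^n | ≤ C (|z|^{α−1} + |w|^{α−1}) |z − w|. -/

import Mathlib

private lemma unit_pow_sub (u v : ℂ) (hu : ‖u‖ = 1) (hv : ‖v‖ = 1) :
    ∀ k : ℕ, ‖(u ^ k - v ^ k)‖ ≤ (k : ℝ) * ‖(u - v)‖ := by
  intro k
  induction k with
  | zero => simp
  | succ k ih =>
    have hrw : u ^ (k + 1) - v ^ (k + 1) = u ^ k * (u - v) + (u ^ k - v ^ k) * v := by ring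
    rw [hrw]
    calc ‖(u ^ k * (u - v) + (u ^ k - v ^ k) * v)‖
        ≤ ‖(u ^ k * (u - v))‖ + ‖((u ^ k - v ^ k) * v)‖ :=
          norm_add_le _ _
      _ = ‖(u - v)‖ + ‖(u ^ k - v ^ k)‖ := by
          simp [norm_mul, norm_pow, hu, hv]
      _ ≤ ‖(u - v)‖ + (k : ℝ) * ‖(u - v)‖ := by linarith
      _ = ((k + 1 : ℕ) : ℝ) * ‖(u - v)‖ := by push_cast; ring

private lemma unit_zpow_sub (u v : ℂ) (hu : ‖u‖ = 1) (hv : ‖v‖ = 1)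
    (n : ℤ) : ‖(u ^ n - v ^ n)‖ ≤ |(n : ℝ)| * ‖(u - v)‖ := by
  have hu0 : u ≠ 0 := by intro h0; rw [h0] at hu; simp at hu
  have hv0 : v ≠ 0 := by intro h0; rw [h0] at hv; simp at hv
  rcases le_or_gt 0 n with h | h
  · lift n to ℕ using h
    rw [zpow_natCast, zpow_natCast]
    have := unit_pow_sub u v hu hv n
    simpa using this
  · set m : ℕ := (-n).toNat with hm
    have hmn : (m : ℤ) = -n := Int.toNat_of_nonneg (by omega)
    have key : u ^ n - v ^ n = (v ^ m - u ^ m) * u ^ n * v ^ n := by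
      have h1 : (u : ℂ) ^ m * u ^ n = 1 := by
        rw [← zpow_natCast u m, ← zpow_add₀ hu0, hmn]; simp
      have h2 : (v : ℂ) ^ m * v ^ n = 1 := by
        rw [← zpow_natCast v m, ← zpow_add₀ hv0, hmn]; simp
      calc u ^ n - v ^ n = (v ^ m * v ^ n) * u ^ n - (u ^ m * u ^ n) * v ^ n := by
            rw [h1, h2]; ring
        _ = (v ^ m - u ^ m) * u ^ n * v ^ n := by ring
    rw [key, norm_mul, norm_mul]
    have hun : ‖(u ^ n)‖ = 1 := by
      rw [norm_zpow, hu]; simp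
    have hvn : ‖(v ^ n)‖ = 1 := by
      rw [norm_zpow, hv]; simp
    rw [hun, hvn, mul_one, mul_one]
    have := unit_pow_sub v u hv hu m
    have habs : ‖(v - u)‖ = ‖(u - v)‖ := by
      rw [← norm_neg]; ring_nf
    rw [habs] at this
    refine this.trans ?_
    apply mul_le_mul_of_nonneg_right _ (norm_nonneg _)
    have hmr : (m : ℝ) = -(n : ℝ) := by exact_mod_cast congrArg (Int.cast : ℤ → ℝ) hmn
    rw [hmr]
    exact neg_le_abs _

private lemma rpow_sub_rpow_le (a b α : ℝ) (hb : 0 ≤ b) (hba : b ≤ a) (hα : 1 ≤ α) :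
    a ^ α - b ^ α ≤ α * a ^ (α - 1) * (a - b) := by
  rcases eq_or_lt_of_le (hb.trans hba) with h0 | h0
  · have ha : a = 0 := h0.symm
    have hb0 : b = 0 := le_antisymm (ha ▸ hba) hb
    subst ha hb0
    rw [Real.zero_rpow (by linarith : α ≠ 0)]
    simp
  · set s : ℝ := b / a - 1 with hs
    have hs1 : -1 ≤ s := by
      have : 0 ≤ b / a := div_nonneg hb h0.le
      simp only [hs]; linarith
    have hbern := one_add_mul_self_le_rpow_one_add hs1 hα
    have h1s : 1 + s = b / a := by simp [hs]
    rw [h1s, Real.div_rpow hb h0.le] at hbern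
    have hapos : 0 < a ^ α := Real.rpow_pos_of_pos h0 α
    have key : (1 + α * s) * a ^ α ≤ b ^ α := by
      have := mul_le_mul_of_nonneg_right hbern hapos.le
      rwa [div_mul_cancel₀ _ (ne_of_gt hapos)] at this
    have hneg : α * a ^ (α - 1) * (a - b) = -(α * s) * a ^ α := by
      rw [Real.rpow_sub h0, Real.rpow_one, hs]
      field_simp
      ring
    rw [hneg]
    nlinarith [key]

private lemma unit_dir_sub (z w : ℂ) (hw : w ≠ 0) (hzw : ‖w‖ ≤ ‖z‖) :
    ‖(z / (‖z‖ : ℂ) - w / (‖w‖ : ℂ))‖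
      ≤ 2 * ‖(z - w)‖ / ‖z‖ := by
  set a := ‖z‖ with ha'
  set b := ‖w‖ with hb'
  have hb : 0 < b := by simpa [hb'] using norm_pos_iff.mpr hw
  have ha : 0 < a := lt_of_lt_of_le hb hzw
  have hane : (a : ℂ) ≠ 0 := by exact_mod_cast ne_of_gt ha
  have hbne : (b : ℂ) ≠ 0 := by exact_mod_cast ne_of_gt hb
  have hrw : z / (a : ℂ) - w / (b : ℂ)
      = (z - w) / (a : ℂ) + w * ((b : ℂ) - (a : ℂ)) / ((a : ℂ) * (b : ℂ)) := by
    field_simp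
    ring
  have habv : |a - b| ≤ ‖(z - w)‖ := abs_norm_sub_norm_le z w
  have h2 : ‖(w * ((b : ℂ) - (a : ℂ)) / ((a : ℂ) * (b : ℂ)))‖
      = |b - a| / a := by
    rw [norm_div, norm_mul, norm_mul]
    have : ‖((b : ℂ) - (a : ℂ))‖ = |b - a| := by
      rw [← Complex.ofReal_sub, Complex.norm_real, Real.norm_eq_abs]
    rw [this, Complex.norm_real, Real.norm_eq_abs, Complex.norm_real, Real.norm_eq_abs, abs_of_pos ha, abs_of_pos hb]
    rw [← hb']
    field_simp
  calc ‖(z / (a : ℂ) - w / (b : ℂ))‖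
      ≤ ‖((z - w) / (a : ℂ))‖ + ‖(w * ((b : ℂ) - (a : ℂ)) / ((a : ℂ) * (b : ℂ)))‖ := by
        rw [hrw]; exact norm_add_le _ _
    _ = ‖(z - w)‖ / a + |b - a| / a := by
        rw [h2, norm_div, Complex.norm_real, Real.norm_eq_abs, abs_of_pos ha]
    _ ≤ ‖(z - w)‖ / a + ‖(z - w)‖ / a := by
        have : |b - a| ≤ ‖(z - w)‖ := by rwa [abs_sub_comm] at habv
        gcongr
    _ = 2 * ‖(z - w)‖ / a := by ring

private lemma Fzero (α : ℝ) (hα : 1 ≤ α) (n : ℤ) :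
    ((‖(0 : ℂ)‖ ^ (α - (n : ℝ)) : ℝ) : ℂ) * (0 : ℂ) ^ n = 0 := by
  by_cases hn0 : n = 0
  · subst hn0
    simp [Real.zero_rpow (by linarith : α ≠ 0)]
  · simp [zero_zpow _ hn0]

/-- Lemma 2.2 (nl:1): for `α ≥ 1` and `n : ℤ`, there is `C > 0` such that
`| |z|^(α−n) z^n − |w|^(α−n) w^n | ≤ C (|z|^(α−1) + |w|^(α−1)) |z − w|` for all `z w : ℂ`. -/
theorem nonlinearity_difference_estimate (α : ℝ) (hα : 1 ≤ α) (n : ℤ) :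
    ∃ C : ℝ, 0 < C ∧ ∀ z w : ℂ,
      ‖(((‖z‖ ^ (α - (n : ℝ)) : ℝ) : ℂ) * z ^ n
          - ((‖w‖ ^ (α - (n : ℝ)) : ℝ) : ℂ) * w ^ n)‖
        ≤ C * ((‖z‖ ^ (α - 1) + ‖w‖ ^ (α - 1)) * ‖(z - w)‖) := by
  set C : ℝ := 2 * |(n : ℝ)| + α + 1 with hC
  have hC1 : 1 ≤ C := by
    have := abs_nonneg ((n : ℝ))
    simp only [hC]; linarith
  have hCpos : 0 < C := lt_of_lt_of_le one_pos hC1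
  have main : ∀ z w : ℂ, ‖w‖ ≤ ‖z‖ →
      ‖(((‖z‖ ^ (α - (n : ℝ)) : ℝ) : ℂ) * z ^ n
          - ((‖w‖ ^ (α - (n : ℝ)) : ℝ) : ℂ) * w ^ n)‖
        ≤ C * ((‖z‖ ^ (α - 1) + ‖w‖ ^ (α - 1)) * ‖(z - w)‖) := by
    intro z w hle
    set a := ‖z‖ with ha'
    set b := ‖w‖ with hb'
    set d := ‖(z - w)‖ with hd'
    have ha0 : 0 ≤ a := norm_nonneg z
    have hb0 : 0 ≤ b := norm_nonneg w
    have hd0 : 0 ≤ d := norm_nonneg _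
    by_cases hw : w = 0
    · subst hw
      by_cases hz : z = 0
      · subst hz
        rw [Fzero α hα n, sub_zero, norm_zero]
        positivity
      · have ha : 0 < a := norm_pos_iff.mpr hz
        rw [Fzero α hα n, sub_zero]
        have hd : d = a := by simp [hd', ha']
        have hLHS : ‖(((a ^ (α - (n : ℝ)) : ℝ) : ℂ) * z ^ n)‖ = a ^ α := by
          rw [norm_mul, Complex.norm_real, Real.norm_eq_abs, norm_zpow, ← ha',
            abs_of_nonneg (Real.rpow_nonneg ha0 _), ← Real.rpow_intCast a n,
            ← Real.rpow_add ha]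
          ring_nf
        rw [hLHS]
        have haa : a ^ α = a ^ (α - 1) * a := by
          rw [Real.rpow_sub ha, Real.rpow_one, div_mul_cancel₀ _ (ne_of_gt ha)]
        have h1 : (0 : ℝ) ≤ b ^ (α - 1) := Real.rpow_nonneg hb0 _
        have h2 : (0 : ℝ) ≤ a ^ (α - 1) := Real.rpow_nonneg ha0 _
        rw [hd, haa]
        nlinarith [mul_nonneg (mul_nonneg (sub_nonneg.mpr hC1) h2) ha0,
          mul_nonneg (mul_nonneg hCpos.le h1) ha0]
    · have hb : 0 < b := norm_pos_iff.mpr hw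
      have ha : 0 < a := lt_of_lt_of_le hb hle
      have hz : z ≠ 0 := by
        intro h; rw [h] at ha'; simp [ha'] at ha
      have hane : (a : ℂ) ≠ 0 := by exact_mod_cast ne_of_gt ha
      have hbne : (b : ℂ) ≠ 0 := by exact_mod_cast ne_of_gt hb
      set u : ℂ := z / (a : ℂ) with hu'
      set v : ℂ := w / (b : ℂ) with hv'
      have hu : ‖u‖ = 1 := by
        rw [hu', norm_div, Complex.norm_real, Real.norm_eq_abs, abs_of_pos ha, ← ha', div_self (ne_of_gt ha)]
      have hv : ‖v‖ = 1 := by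
        rw [hv', norm_div, Complex.norm_real, Real.norm_eq_abs, abs_of_pos hb, ← hb', div_self (ne_of_gt hb)]
      have hzu : z = (a : ℂ) * u := by
        rw [hu', mul_div_cancel₀ _ hane]
      have hwv : w = (b : ℂ) * v := by
        rw [hv', mul_div_cancel₀ _ hbne]
      have hcomb : ∀ (c : ℝ) (x : ℂ), 0 < c →
          ((c ^ (α - (n : ℝ)) : ℝ) : ℂ) * ((c : ℂ) * x) ^ n = ((c ^ α : ℝ) : ℂ) * x ^ n := by
        intro c x hc
        rw [mul_zpow]
        have h1 : ((c : ℂ)) ^ n = ((c ^ n : ℝ) : ℂ) := by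
          rw [Complex.ofReal_zpow]
        rw [h1, ← mul_assoc, ← Complex.ofReal_mul, ← Real.rpow_intCast c n,
          ← Real.rpow_add hc]
        ring_nf
      have hFz : ((a ^ (α - (n : ℝ)) : ℝ) : ℂ) * z ^ n = ((a ^ α : ℝ) : ℂ) * u ^ n := by
        rw [hzu] at *
        exact hcomb a u ha
      have hFw : ((b ^ (α - (n : ℝ)) : ℝ) : ℂ) * w ^ n = ((b ^ α : ℝ) : ℂ) * v ^ n := by
        rw [hwv] at *
        exact hcomb b v hb
      rw [hFz, hFw]
      have hdecomp : ((a ^ α : ℝ) : ℂ) * u ^ n - ((b ^ α : ℝ) : ℂ) * v ^ n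
          = ((a ^ α : ℝ) : ℂ) * (u ^ n - v ^ n) + ((a ^ α - b ^ α : ℝ) : ℂ) * v ^ n := by
        push_cast
        ring
      rw [hdecomp]
      have hvn : ‖(v ^ n)‖ = 1 := by rw [norm_zpow, hv, one_zpow]
      have step1 : ‖(((a ^ α : ℝ) : ℂ) * (u ^ n - v ^ n) + ((a ^ α - b ^ α : ℝ) : ℂ) * v ^ n)‖
          ≤ a ^ α * ‖(u ^ n - v ^ n)‖ + |a ^ α - b ^ α| := by
        calc ‖_‖ ≤ ‖(((a ^ α : ℝ) : ℂ) * (u ^ n - v ^ n))‖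
              + ‖(((a ^ α - b ^ α : ℝ) : ℂ) * v ^ n)‖ := norm_add_le _ _
          _ = a ^ α * ‖(u ^ n - v ^ n)‖ + |a ^ α - b ^ α| := by
              rw [norm_mul, norm_mul, hvn, mul_one, Complex.norm_real, Real.norm_eq_abs, Complex.norm_real, Real.norm_eq_abs,
                abs_of_nonneg (Real.rpow_nonneg ha0 _)]
      have huv : ‖(u - v)‖ ≤ 2 * d / a := unit_dir_sub z w hw hle
      have hbd1 : ‖(u ^ n - v ^ n)‖ ≤ |(n : ℝ)| * (2 * d / a) := by
        refine (unit_zpow_sub u v hu hv n).trans ?_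
        exact mul_le_mul_of_nonneg_left huv (abs_nonneg _)
      have hab : a - b ≤ d := by
        have := abs_norm_sub_norm_le z w
        have h2 := le_abs_self (a - b)
        rw [← ha', ← hb', ← hd'] at *
        linarith [this, h2]
      have hmono : b ^ α ≤ a ^ α := Real.rpow_le_rpow hb0 hle (by linarith)
      have ham1 : 0 ≤ a ^ (α - 1) := Real.rpow_nonneg ha0 _
      have hbd2 : |a ^ α - b ^ α| ≤ α * a ^ (α - 1) * d := by
        rw [abs_of_nonneg (by linarith)]
        refine (rpow_sub_rpow_le a b α hb0 hle hα).trans ?_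
        have : 0 ≤ α * a ^ (α - 1) := by positivity
        exact mul_le_mul_of_nonneg_left hab this
      have haa : a ^ α = a ^ (α - 1) * a := by
        rw [Real.rpow_sub ha, Real.rpow_one, div_mul_cancel₀ _ (ne_of_gt ha)]
      have hterm1 : a ^ α * (|(n : ℝ)| * (2 * d / a)) = 2 * |(n : ℝ)| * (a ^ (α - 1) * d) := by
        rw [haa]
        field_simp
      have hbm1 : 0 ≤ b ^ (α - 1) := Real.rpow_nonneg hb0 _
      calc ‖(((a ^ α : ℝ) : ℂ) * (u ^ n - v ^ n) + ((a ^ α - b ^ α : ℝ) : ℂ) * v ^ n)‖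
          ≤ a ^ α * ‖(u ^ n - v ^ n)‖ + |a ^ α - b ^ α| := step1
        _ ≤ a ^ α * (|(n : ℝ)| * (2 * d / a)) + α * a ^ (α - 1) * d := by
            refine add_le_add ?_ hbd2
            exact mul_le_mul_of_nonneg_left hbd1 (Real.rpow_nonneg ha0 _)
        _ = 2 * |(n : ℝ)| * (a ^ (α - 1) * d) + α * a ^ (α - 1) * d := by rw [hterm1]
        _ ≤ C * ((a ^ (α - 1) + b ^ (α - 1)) * d) := by
            have hc0 : (0 : ℝ) ≤ 2 * |(n : ℝ)| + α + 1 := by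
              have := abs_nonneg ((n : ℝ)); linarith
            simp only [hC]
            nlinarith [mul_nonneg ham1 hd0, mul_nonneg (mul_nonneg hc0 hbm1) hd0]
  refine ⟨C, hCpos, fun z w => ?_⟩
  rcases le_total (‖w‖) (‖z‖) with hle | hle
  · exact main z w hle
  · have h := main w z hle
    have e1 : ‖(((‖z‖ ^ (α - (n : ℝ)) : ℝ) : ℂ) * z ^ n
        - ((‖w‖ ^ (α - (n : ℝ)) : ℝ) : ℂ) * w ^ n)‖
        = ‖(((‖w‖ ^ (α - (n : ℝ)) : ℝ) : ℂ) * w ^ n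
        - ((‖z‖ ^ (α - (n : ℝ)) : ℝ) : ℂ) * z ^ n)‖ := by
      rw [← norm_neg]; ring_nf
    have e2 : ‖(z - w)‖ = ‖(w - z)‖ := by
      rw [← norm_neg]; ring_nf
    rw [e1, e2, add_comm (‖z‖ ^ (α - 1))]
    exact h
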